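/- arXiv:0802.0383 — 3 statements merged into one kernel-verified Lean document; each statement's English description precedes it below -/
import Mathlib

section
/- Let z_1,…,z_k be distinct complex numbers, w_1,…,w_{k-2} complex numbers distinct from each other and from all z_i. Fix an index i₀ ∈ {1,…,k-2}. Then (∏_{s=1}^{k}(w_{i₀} − z_s) / ∏_{s≠i₀}(w_{i₀} − w_s)) · Σ_{m=1}^{k} ∏_{l=1}^{k-2}(z_m − w_l) / (∏_{l≠m}(z_m − z_l)(w_{i₀} − z_m)²) = −1. -/
open Finset

theorem residue_at_w_equals_neg_one (k : ℕ) (z : Fin (k + 2) → ℂ) (w : Fin k → ℂ)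
    (hz : Function.Injective z) (hw : Function.Injective w)
    (hzw : ∀ i j, z i ≠ w j) (i₀ : Fin k) :
    ((∏ s : Fin (k + 2), (w i₀ - z s)) / (∏ s ∈ Finset.univ.erase i₀, (w i₀ - w s))) *
      ∑ m : Fin (k + 2), (∏ l : Fin k, (z m - w l)) /
        ((∏ l ∈ Finset.univ.erase m, (z m - z l)) * (w i₀ - z m) ^ 2) = -1 := by
  classical
  set a := w i₀ with ha
  set P₁ : Polynomial ℂ := Lagrange.nodal (Finset.univ.erase i₀) w with hP₁
  have hzinj : Set.InjOn z (Finset.univ : Finset (Fin (k + 2))) := fun x _ y _ h => hz h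
  have hQ : (∏ s : Fin (k + 2), (a - z s)) ≠ 0 := by
    rw [Finset.prod_ne_zero_iff]
    intro s _
    exact sub_ne_zero_of_ne fun h => hzw s i₀ h.symm
  have hc : (∏ s ∈ Finset.univ.erase i₀, (a - w s)) ≠ 0 := by
    rw [Finset.prod_ne_zero_iff]
    intro s hs
    exact sub_ne_zero_of_ne fun h => (Finset.mem_erase.mp hs).1 (hw h.symm)
  have hdeg : P₁.degree < (#(Finset.univ : Finset (Fin (k + 2))) : WithBot ℕ) := by
    rw [hP₁, Lagrange.degree_nodal]
    have h1 : #((Finset.univ : Finset (Fin k)).erase i₀) = k - 1 := by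
      rw [Finset.card_erase_of_mem (Finset.mem_univ _), Finset.card_univ, Fintype.card_fin]
    rw [h1, Finset.card_univ, Fintype.card_fin]
    exact_mod_cast Nat.lt_of_le_of_lt (Nat.sub_le k 1) (by omega)
  have key := Lagrange.eq_interpolate hzinj hdeg
  have hx : ∀ i ∈ (Finset.univ : Finset (Fin (k + 2))), a ≠ z i := fun i _ h => hzw i i₀ h.symm
  have heval := congrArg (Polynomial.eval a) key
  rw [Lagrange.eval_interpolate_not_at_node _ hx] at heval
  simp only [Lagrange.eval_nodal] at heval
  have hPa : Polynomial.eval a P₁ = ∏ s ∈ Finset.univ.erase i₀, (a - w s) := by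
    rw [hP₁, Lagrange.eval_nodal]
  have hPz : ∀ m : Fin (k + 2),
      Polynomial.eval (z m) P₁ = ∏ s ∈ Finset.univ.erase i₀, (z m - w s) := fun m => by
    rw [hP₁, Lagrange.eval_nodal]
  -- rewrite the target sum termwise
  have hsum : ∑ m : Fin (k + 2), (∏ l : Fin k, (z m - w l)) /
      ((∏ l ∈ Finset.univ.erase m, (z m - z l)) * (a - z m) ^ 2)
      = -∑ m ∈ (Finset.univ : Finset (Fin (k + 2))),
          Lagrange.nodalWeight Finset.univ z m * (a - z m)⁻¹ * Polynomial.eval (z m) P₁ := by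
    rw [← Finset.sum_neg_distrib]
    refine Finset.sum_congr rfl fun m _ => ?_
    have hD : (∏ l ∈ Finset.univ.erase m, (z m - z l)) ≠ 0 := by
      rw [Finset.prod_ne_zero_iff]
      intro l hl
      exact sub_ne_zero_of_ne fun h => (Finset.mem_erase.mp hl).1 (hz h.symm)
    have hαm : a - z m ≠ 0 := sub_ne_zero_of_ne (hx m (Finset.mem_univ m))
    have hnum : (∏ l : Fin k, (z m - w l)) =
        (z m - a) * ∏ l ∈ Finset.univ.erase i₀, (z m - w l) :=
      (Finset.mul_prod_erase Finset.univ _ (Finset.mem_univ i₀)).symm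
    rw [hnum, hPz m, Lagrange.nodalWeight, Finset.prod_inv_distrib]
    field_simp
    ring
  have hS : (∑ i : Fin (k + 2), Lagrange.nodalWeight Finset.univ z i * (a - z i)⁻¹ *
      Polynomial.eval (z i) P₁)
      = (∏ s ∈ Finset.univ.erase i₀, (a - w s)) / (∏ s : Fin (k + 2), (a - z s)) := by
    rw [eq_div_iff hQ, mul_comm]
    exact heval.symm.trans hPa
  rw [hsum, hS]
  field_simp
end

section
/- Let z_1,…,z_N be distinct complex numbers and λ_1,…,λ_N complex numbers. Let μ_1,…,μ_M be distinct complex numbers, each different from every z_i, satisfying the Bethe equations: for each j, −(1/2)Σ_{i=1}^{N} λ_i/(μ_j − z_i) + Σ_{k≠j} 1/(μ_j − μ_k) = 0. Define H_i = −λ_i(Σ_{j=1}^{M} 1/(z_i − μ_j) − (1/2)Σ_{j≠i} λ_j/(z_i − z_j)). Then the function Ψ(z) = ∏_{i=1}^{N}(z − z_i)^{−λ_i/2} · ∏_{j=1}^{M}(z − μ_j) satisfies, on the complement of {z_1,…,z_N, μ_1,…,μ_M}, the equation Ψ''(z) = ( (1/4)Σ_i λ_i(λ_i+2)/(z − z_i)²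 + Σ_i H_i/(z − z_i) ) Ψ(z). -/
open Finset

lemma pf_inv {x a b : ℂ} (hab : a ≠ b) (hxa : x ≠ a) (hxb : x ≠ b) :
    (x - a)⁻¹ * (x - b)⁻¹ = (a - b)⁻¹ * ((x - a)⁻¹ - (x - b)⁻¹) := by
  have h1 : x - a ≠ 0 := sub_ne_zero.mpr hxa
  have h2 : x - b ≠ 0 := sub_ne_zero.mpr hxb
  have h3 : a - b ≠ 0 := sub_ne_zero.mpr hab
  field_simp
  ring

lemma sum_erase_swap {n : ℕ} (f : Fin n → Fin n → ℂ) :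
    ∑ i, ∑ j ∈ Finset.univ.erase i, f i j = ∑ i, ∑ j ∈ Finset.univ.erase i, f j i := by
  simp only [← Finset.filter_ne', Finset.sum_filter]
  rw [Finset.sum_comm]
  refine Finset.sum_congr rfl fun i _ => Finset.sum_congr rfl fun j _ => ?_
  by_cases h : i = j
  · simp [h]
  · simp [h, Ne.symm h]

lemma pair_sum {n : ℕ} (x : ℂ) (w p : Fin n → ℂ) (hp : Function.Injective p)
    (hx : ∀ i, x ≠ p i) :
    (∑ i, w i * (x - p i)⁻¹) ^ 2
      = ∑ i, w i ^ 2 * ((x - p i)⁻¹) ^ 2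
        + 2 * ∑ i, (w i * (x - p i)⁻¹) * ∑ j ∈ Finset.univ.erase i, w j * (p i - p j)⁻¹ := by
  have hsplit : ∀ i : Fin n, ∑ j, (w i * (x - p i)⁻¹) * (w j * (x - p j)⁻¹)
      = w i ^ 2 * ((x - p i)⁻¹) ^ 2
        + ∑ j ∈ Finset.univ.erase i, (w i * (x - p i)⁻¹) * (w j * (x - p j)⁻¹) := by
    intro i
    rw [← Finset.add_sum_erase _ _ (Finset.mem_univ i)]
    congr 1
    ring
  rw [sq, Finset.sum_mul_sum, Finset.sum_congr rfl (fun i _ => hsplit i),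
    Finset.sum_add_distrib]
  congr 1
  have point : ∀ i : Fin n, ∀ j ∈ Finset.univ.erase i,
      (w i * (x - p i)⁻¹) * (w j * (x - p j)⁻¹)
        = w i * w j * (p i - p j)⁻¹ * (x - p i)⁻¹
          - w i * w j * (p i - p j)⁻¹ * (x - p j)⁻¹ := by
    intro i j hj
    have hij : p i ≠ p j := fun h => (Finset.mem_erase.mp hj).1 (hp h.symm)
    have := pf_inv hij (hx i) (hx j)
    calc (w i * (x - p i)⁻¹) * (w j * (x - p j)⁻¹)
        = w i * w j * ((x - p i)⁻¹ * (x - p j)⁻¹) := by ring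
      _ = w i * w j * ((p i - p j)⁻¹ * ((x - p i)⁻¹ - (x - p j)⁻¹)) := by rw [this]
      _ = _ := by ring
  calc ∑ i, ∑ j ∈ Finset.univ.erase i, (w i * (x - p i)⁻¹) * (w j * (x - p j)⁻¹)
      = ∑ i, ∑ j ∈ Finset.univ.erase i,
          (w i * w j * (p i - p j)⁻¹ * (x - p i)⁻¹
            - w i * w j * (p i - p j)⁻¹ * (x - p j)⁻¹) :=
        Finset.sum_congr rfl fun i _ => Finset.sum_congr rfl fun j hj => point i j hj
    _ = ∑ i, ∑ j ∈ Finset.univ.erase i, w i * w j * (p i - p j)⁻¹ * (x - p i)⁻¹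
        - ∑ i, ∑ j ∈ Finset.univ.erase i, w i * w j * (p i - p j)⁻¹ * (x - p j)⁻¹ := by
        simp only [Finset.sum_sub_distrib]
    _ = 2 * ∑ i, (w i * (x - p i)⁻¹) * ∑ j ∈ Finset.univ.erase i, w j * (p i - p j)⁻¹ := by
        rw [sum_erase_swap (fun i j => w i * w j * (p i - p j)⁻¹ * (x - p j)⁻¹),
          ← Finset.sum_sub_distrib, Finset.mul_sum]
        refine Finset.sum_congr rfl fun i _ => ?_
        rw [← Finset.sum_sub_distrib, Finset.mul_sum, Finset.mul_sum]
        refine Finset.sum_congr rfl fun j hj => ?_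
        have hneg : (p j - p i)⁻¹ = -(p i - p j)⁻¹ := by rw [← neg_sub (p i), inv_neg]
        rw [hneg]; ring

lemma cross_sum {n m : ℕ} (x : ℂ) (w : Fin n → ℂ) (p : Fin n → ℂ) (q : Fin m → ℂ)
    (hpq : ∀ i j, p i ≠ q j) (hxp : ∀ i, x ≠ p i) (hxq : ∀ j, x ≠ q j) :
    (∑ i, w i * (x - p i)⁻¹) * (∑ j, (x - q j)⁻¹)
      = ∑ i, (w i * (x - p i)⁻¹) * (∑ j, (p i - q j)⁻¹)
        + ∑ j, (x - q j)⁻¹ * (∑ i, w i * (q j - p i)⁻¹) := by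
  have point : ∀ (i : Fin n) (j : Fin m),
      (w i * (x - p i)⁻¹) * (x - q j)⁻¹
        = w i * (p i - q j)⁻¹ * (x - p i)⁻¹ - w i * (p i - q j)⁻¹ * (x - q j)⁻¹ := by
    intro i j
    have := pf_inv (hpq i j) (hxp i) (hxq j)
    calc (w i * (x - p i)⁻¹) * (x - q j)⁻¹
        = w i * ((x - p i)⁻¹ * (x - q j)⁻¹) := by ring
      _ = w i * ((p i - q j)⁻¹ * ((x - p i)⁻¹ - (x - q j)⁻¹)) := by rw [this]
      _ = _ := by ring
  rw [Finset.sum_mul_sum]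
  calc ∑ i, ∑ j, (w i * (x - p i)⁻¹) * (x - q j)⁻¹
      = ∑ i, ∑ j, (w i * (p i - q j)⁻¹ * (x - p i)⁻¹ - w i * (p i - q j)⁻¹ * (x - q j)⁻¹) :=
        Finset.sum_congr rfl fun i _ => Finset.sum_congr rfl fun j _ => point i j
    _ = ∑ i, ∑ j, w i * (p i - q j)⁻¹ * (x - p i)⁻¹
        - ∑ i, ∑ j, w i * (p i - q j)⁻¹ * (x - q j)⁻¹ := by
        simp only [Finset.sum_sub_distrib]
    _ = _ := by
        rw [Finset.sum_comm (f := fun i j => w i * (p i - q j)⁻¹ * (x - q j)⁻¹)]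
        rw [sub_eq_add_neg, ← Finset.sum_neg_distrib]
        congr 1
        · refine Finset.sum_congr rfl fun i _ => ?_
          rw [Finset.mul_sum]
          exact Finset.sum_congr rfl fun j _ => by ring
        · refine Finset.sum_congr rfl fun j _ => ?_
          rw [Finset.mul_sum, ← Finset.sum_neg_distrib]
          refine Finset.sum_congr rfl fun i _ => ?_
          have hneg : (q j - p i)⁻¹ = -(p i - q j)⁻¹ := by rw [← neg_sub (p i), inv_neg]
          rw [hneg]; ring

lemma hasDerivAt_inv_sub (x a : ℂ) (h : x ≠ a) :
    HasDerivAt (fun y : ℂ => (y - a)⁻¹) (-(((x - a)⁻¹) ^ 2)) x := by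
  have hs : HasDerivAt (fun y : ℂ => y - a) 1 x := (hasDerivAt_id x).sub_const a
  have := hs.fun_inv (sub_ne_zero.mpr h)
  rw [show -(((x - a)⁻¹) ^ 2) = -1 / (x - a) ^ 2 by rw [inv_pow, neg_div, one_div]]
  exact this

/-- Bethe equations imply that the logarithmic derivative
`L = Ψ'/Ψ` of `Ψ(z) = ∏ (z - z_i)^{-λ_i/2} ∏ (z - μ_j)` satisfies
`L' + L² = (1/4)Σ λ_i(λ_i+2)/(z-z_i)² + Σ H_i/(z-z_i)`, i.e. `Ψ'' = (...)Ψ`. -/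
theorem bethe_implies_oper (N M : ℕ) (z : Fin N → ℂ) (lam : Fin N → ℂ)
    (μ : Fin M → ℂ)
    (hz : Function.Injective z) (hμ : Function.Injective μ)
    (hμz : ∀ j i, μ j ≠ z i)
    (hBethe : ∀ j : Fin M,
      -(1 / 2) * (∑ i : Fin N, lam i / (μ j - z i)) +
        ∑ k ∈ Finset.univ.erase j, 1 / (μ j - μ k) = 0)
    (H : Fin N → ℂ)
    (hH : ∀ i : Fin N, H i = -lam i * ((∑ j : Fin M, 1 / (z i - μ j)) -
      (1 / 2) * ∑ j ∈ Finset.univ.erase i, lam j / (z i - z j)))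
    (L : ℂ → ℂ)
    (hL : ∀ x : ℂ, L x = -(1 / 2) * (∑ i : Fin N, lam i / (x - z i)) +
      ∑ j : Fin M, 1 / (x - μ j)) :
    ∀ x : ℂ, (∀ i, x ≠ z i) → (∀ j, x ≠ μ j) →
      deriv L x + (L x) ^ 2 =
        (1 / 4) * (∑ i : Fin N, lam i * (lam i + 2) / (x - z i) ^ 2) +
        ∑ i : Fin N, H i / (x - z i) := by
  intro x hxz hxμ
  have hLfun : L = fun y => -(1 / 2) * (∑ i : Fin N, lam i / (y - z i)) +
      ∑ j : Fin M, 1 / (y - μ j) := funext hL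
  -- the derivative of L at x
  have hd : HasDerivAt L
      ((1 / 2) * ∑ i, lam i * ((x - z i)⁻¹) ^ 2 - ∑ j, ((x - μ j)⁻¹) ^ 2) x := by
    rw [hLfun]
    have h1 : HasDerivAt (fun y => -(1 / 2) * (∑ i : Fin N, lam i / (y - z i)))
        (-(1 / 2) * ∑ i : Fin N, -(lam i * ((x - z i)⁻¹) ^ 2)) x := by
      refine (HasDerivAt.fun_sum fun i _ => ?_).const_mul _
      have hm := (hasDerivAt_inv_sub x (z i) (hxz i)).const_mul (lam i)
      have hfe : (fun y : ℂ => lam i / (y - z i)) = fun y => lam i * (y - z i)⁻¹ := by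
        funext y; rw [div_eq_mul_inv]
      rw [hfe]
      exact hm.congr_deriv (by ring)
    have h2 : HasDerivAt (fun y => ∑ j : Fin M, 1 / (y - μ j))
        (∑ j : Fin M, -(((x - μ j)⁻¹) ^ 2)) x := by
      refine HasDerivAt.fun_sum fun j _ => ?_
      have hfe : (fun y : ℂ => 1 / (y - μ j)) = fun y => (y - μ j)⁻¹ := by
        funext y; rw [one_div]
      rw [hfe]
      exact hasDerivAt_inv_sub x (μ j) (hxμ j)
    refine (h1.add h2).congr_deriv ?_
    simp only [Finset.sum_neg_distrib]
    ring
  rw [hd.deriv, hL x]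
  -- algebraic identities
  have hA2 := pair_sum x lam z hz hxz
  have hB2 := pair_sum x (fun _ => (1 : ℂ)) μ hμ hxμ
  simp only [one_mul, one_pow] at hB2
  have hAB := cross_sum x lam z μ (fun i j => (hμz j i).symm) hxz hxμ
  have hBe : ∀ j : Fin M, (∑ i, lam i * (μ j - z i)⁻¹)
      = 2 * ∑ k ∈ Finset.univ.erase j, (μ j - μ k)⁻¹ := by
    intro j
    have hb := hBethe j
    simp only [div_eq_mul_inv, one_mul] at hb
    linear_combination (-2 : ℂ) * hb
  have hH' : ∀ i, H i = -lam i * (∑ j, (z i - μ j)⁻¹)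
      + (1 / 2) * lam i * (∑ j ∈ Finset.univ.erase i, lam j * (z i - z j)⁻¹) := by
    intro i
    rw [hH i]
    simp only [div_eq_mul_inv, one_mul]
    ring
  have hX4 : (∑ j, (x - μ j)⁻¹ * ∑ i, lam i * (μ j - z i)⁻¹)
      = 2 * ∑ j, (x - μ j)⁻¹ * ∑ k ∈ Finset.univ.erase j, (μ j - μ k)⁻¹ := by
    rw [Finset.mul_sum]
    refine Finset.sum_congr rfl fun j _ => ?_
    rw [hBe j]; ring
  have hQ : (∑ i, lam i * (lam i + 2) * ((x - z i) ^ 2)⁻¹)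
      = ∑ i, lam i ^ 2 * ((x - z i)⁻¹) ^ 2 + 2 * ∑ i, lam i * ((x - z i)⁻¹) ^ 2 := by
    have hpt : ∀ i, lam i * (lam i + 2) * ((x - z i) ^ 2)⁻¹
        = lam i ^ 2 * ((x - z i)⁻¹) ^ 2 + 2 * (lam i * ((x - z i)⁻¹) ^ 2) := fun i => by
      rw [← inv_pow]; ring
    rw [Finset.sum_congr rfl fun i _ => hpt i, Finset.sum_add_distrib, ← Finset.mul_sum]
  have hX5 : (∑ i, H i * (x - z i)⁻¹)
      = (1 / 2) * ∑ i, (lam i * (x - z i)⁻¹) * ∑ j ∈ Finset.univ.erase i, lam j * (z i - z j)⁻¹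
        - ∑ i, (lam i * (x - z i)⁻¹) * ∑ j, (z i - μ j)⁻¹ := by
    rw [Finset.mul_sum, ← Finset.sum_sub_distrib]
    refine Finset.sum_congr rfl fun i _ => ?_
    rw [hH' i]; ring
  simp only [div_eq_mul_inv, one_mul]
  linear_combination hA2 / 4 - hAB + hB2 - hQ / 4 - hX5 - hX4
end

section
/- Let z_1,…,z_N be distinct complex numbers, λ_1,…,λ_N complex numbers, and μ_1,…,μ_M distinct complex numbers each different from every z_i. Define the meromorphic function L(z) = −(1/2)Σ_{i=1}^{N} λ_i/(z − z_i) + Σ_{j=1}^{M} 1/(z − μ_j). If L'(z) + L(z)² has no pole at any μ_j (i.e. extends holomorphically across each μ_j), then the Bethe equations hold: for every j, −(1/2)Σ_i λ_i/(μ_j − z_i) + Σ_{k≠j} 1/(μ_j − μ_k) = 0. -/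
open Finset Filter Topology

private lemma key_alg (u A B : ℂ) (hu : u ≠ 0) :
    u * ((B + (-1)/u^2) + (1/u + A)^2) = u * (B + A^2) + 2 * A := by
  field_simp
  ring

/-- If `L' + L²` (with `L` the logarithmic derivative of the Bethe ansatz function)
extends holomorphically across each auxiliary point `μ_j`, then the Bethe
equations hold. -/
theorem no_pole_implies_bethe (N M : ℕ) (z : Fin N → ℂ) (lam : Fin N → ℂ)
    (μ : Fin M → ℂ)
    (hz : Function.Injective z) (hμ : Function.Injective μ)
    (hμz : ∀ j i, μ j ≠ z i)
    (L : ℂ → ℂ)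
    (hL : ∀ x : ℂ, L x = -(1 / 2) * (∑ i : Fin N, lam i / (x - z i)) +
      ∑ j : Fin M, 1 / (x - μ j))
    (hext : ∀ j : Fin M, ∃ F : ℂ → ℂ, DifferentiableAt ℂ F (μ j) ∧
      ∀ᶠ x in nhdsWithin (μ j) {μ j}ᶜ, F x = deriv L x + (L x) ^ 2) :
    ∀ j : Fin M,
      -(1 / 2) * (∑ i : Fin N, lam i / (μ j - z i)) +
        ∑ k ∈ Finset.univ.erase j, 1 / (μ j - μ k) = 0 := by
  intro j
  set c : ℂ := μ j with hc
  obtain ⟨F, hFdiff, hFeq⟩ := hext j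
  set g : ℂ → ℂ := fun x => -(1/2) * (∑ i : Fin N, lam i / (x - z i)) +
      ∑ k ∈ Finset.univ.erase j, 1 / (x - μ k) with hgdef
  set E : ℂ → ℂ := fun x => -(1/2) * (∑ i : Fin N, (-(lam i)) / (x - z i)^2) +
      ∑ k ∈ Finset.univ.erase j, (-1) / (x - μ k)^2 with hEdef
  have hczi : ∀ i, c - z i ≠ 0 := fun i => sub_ne_zero.2 (hμz j i)
  have hcμk : ∀ k ∈ Finset.univ.erase j, c - μ k ≠ 0 := by
    intro k hk
    exact sub_ne_zero.2 fun h => (Finset.mem_erase.1 hk).1 (hμ h.symm)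
  -- continuity of g and E at c
  have hgc : Tendsto g (𝓝 c) (𝓝 (g c)) := by
    apply Tendsto.add
    · exact (tendsto_const_nhds.mul (tendsto_finset_sum _ fun i _ =>
        (continuousAt_const.div ((continuous_id.sub continuous_const).continuousAt)
          (hczi i)).tendsto))
    · exact tendsto_finset_sum _ fun k hk =>
        (continuousAt_const.div ((continuous_id.sub continuous_const).continuousAt)
          (hcμk k hk)).tendsto
  have hEc : Tendsto E (𝓝 c) (𝓝 (E c)) := by
    apply Tendsto.add
    · exact (tendsto_const_nhds.mul (tendsto_finset_sum _ fun i _ =>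
        (continuousAt_const.div
          (((continuous_id.sub continuous_const).pow 2).continuousAt)
          (pow_ne_zero 2 (hczi i))).tendsto))
    · exact tendsto_finset_sum _ fun k hk =>
        (continuousAt_const.div
          (((continuous_id.sub continuous_const).pow 2).continuousAt)
          (pow_ne_zero 2 (hcμk k hk))).tendsto
  -- derivative of L away from poles
  have hLform : L = fun x => -(1/2) * (∑ i : Fin N, lam i / (x - z i)) +
      ∑ k : Fin M, 1 / (x - μ k) := funext hL
  have hderiv : ∀ x : ℂ, (∀ i, x ≠ z i) → (∀ k, x ≠ μ k) →
      HasDerivAt L (-(1/2) * (∑ i : Fin N, (-(lam i)) / (x - z i)^2) +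
        ∑ k : Fin M, (-1) / (x - μ k)^2) x := by
    intro x hxz hxμ
    rw [hLform]
    have h1 : HasDerivAt (fun y => ∑ i : Fin N, lam i / (y - z i))
        (∑ i : Fin N, (-(lam i)) / (x - z i)^2) x := by
      apply HasDerivAt.fun_sum
      intro i _
      have hd : HasDerivAt (fun y : ℂ => y - z i) 1 x := (hasDerivAt_id x).sub_const _
      have h := (hasDerivAt_const x (lam i)).div hd (sub_ne_zero.2 (hxz i))
      exact h.congr_deriv (by ring)
    have h2 : HasDerivAt (fun y => ∑ k : Fin M, 1 / (y - μ k))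
        (∑ k : Fin M, (-1) / (x - μ k)^2) x := by
      apply HasDerivAt.fun_sum
      intro k _
      have hd : HasDerivAt (fun y : ℂ => y - μ k) 1 x := (hasDerivAt_id x).sub_const _
      have h := (hasDerivAt_const x (1:ℂ)).div hd (sub_ne_zero.2 (hxμ k))
      exact h.congr_deriv (by ring)
    exact (h1.const_mul (-(1/2))).add h2
  -- eventual identity on punctured neighborhood
  have hev : ∀ᶠ x in 𝓝[≠] c, (x - c) * F x = (x - c) * (E x + g x ^ 2) + 2 * g x := by
    have h1 : ∀ᶠ x in 𝓝 c, ∀ i, x ≠ z i :=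
      eventually_all.2 fun i => eventually_ne_nhds (hμz j i)
    have h2 : ∀ᶠ x in 𝓝 c, ∀ k, k ≠ j → x ≠ μ k := by
      refine eventually_all.2 fun k => ?_
      by_cases hk : k = j
      · exact Eventually.of_forall fun x h => absurd hk h.elim
      · exact (eventually_ne_nhds (fun h : c = μ k => hk (hμ h.symm))).mono
          fun x hx _ => hx
    filter_upwards [nhdsWithin_le_nhds h1, nhdsWithin_le_nhds h2,
      self_mem_nhdsWithin, hFeq] with x hxz hxμe hxc hFx
    have hxc' : x ≠ c := hxc
    have hxμ : ∀ k, x ≠ μ k := by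
      intro k
      by_cases hk : k = j
      · rw [hk]; exact hxc'
      · exact hxμe k hk
    have hD := (hderiv x hxz hxμ).deriv
    have hsum1 : (∑ k : Fin M, (-1:ℂ) / (x - μ k)^2) =
        (-1) / (x - μ j)^2 + ∑ k ∈ Finset.univ.erase j, (-1) / (x - μ k)^2 :=
      (Finset.add_sum_erase _ _ (Finset.mem_univ j)).symm
    have hsum2 : (∑ k : Fin M, (1:ℂ) / (x - μ k)) =
        1 / (x - μ j) + ∑ k ∈ Finset.univ.erase j, 1 / (x - μ k) :=
      (Finset.add_sum_erase _ _ (Finset.mem_univ j)).symm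
    have hDL : deriv L x = E x + (-1) / (x - c)^2 := by
      rw [hD, hsum1, hEdef]
      ring
    have hLx : L x = 1 / (x - c) + g x := by
      rw [hL x, hsum2, hgdef]
      ring
    rw [hFx, hDL, hLx]
    exact key_alg (x - c) (g x) (E x) (sub_ne_zero.2 hxc')
  -- two limits
  have hT1 : Tendsto (fun x => (x - c) * F x) (𝓝[≠] c) (𝓝 0) := by
    have : Tendsto (fun x => (x - c) * F x) (𝓝 c) (𝓝 ((c - c) * F c)) :=
      ((continuous_id.sub continuous_const).continuousAt.tendsto).mul
        hFdiff.continuousAt.tendsto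
    simpa using this.mono_left nhdsWithin_le_nhds
  have hT2 : Tendsto (fun x => (x - c) * F x) (𝓝[≠] c) (𝓝 (2 * g c)) := by
    have : Tendsto (fun x => (x - c) * (E x + g x ^ 2) + 2 * g x) (𝓝 c)
        (𝓝 ((c - c) * (E c + g c ^ 2) + 2 * g c)) := by
      exact (((continuous_id.sub continuous_const).continuousAt.tendsto).mul
        (hEc.add (hgc.pow 2))).add (tendsto_const_nhds.mul hgc)
    have h' := this.mono_left (nhdsWithin_le_nhds (s := {c}ᶜ))
    simp only [sub_self, zero_mul, zero_add] at h'
    exact Tendsto.congr' (hev.mono fun x hx => hx.symm) h'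
  have h0 : (2 : ℂ) * g c = 0 := (tendsto_nhds_unique hT2 hT1)
  have : g c = 0 := by
    have h2 : (2:ℂ) ≠ 0 := two_ne_zero
    exact (mul_eq_zero.1 h0).resolve_left h2
  simpa [hgdef] using this
end
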